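/- The element i ∈ ℚ(i) is not a norm from ℚ(i,√5) to ℚ(i); hence the cyclic algebra (ℚ(i,√5)/ℚ(i), σ, i), where σ sends √5 to −√5, is a division algebra. -/

import Mathlib

open Complex IntermediateField

/-- `F = ℚ(i)` as a subfield of `ℂ`. -/
noncomputable def F8 : IntermediateField ℚ ℂ := ℚ⟮Complex.I⟯

/-- `K = ℚ(i, √5) = F(√5)` as an extension of `F = ℚ(i)`. -/
noncomputable def K8 : IntermediateField F8 ℂ :=
  IntermediateField.adjoin F8 {((Real.sqrt 5 : ℝ) : ℂ)}

/-- `√5` as an element of `K = ℚ(i,√5)`. -/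
noncomputable def sqrt5K : K8 :=
  ⟨((Real.sqrt 5 : ℝ) : ℂ), IntermediateField.subset_adjoin _ _ rfl⟩

/-- `i` as an element of `F = ℚ(i)`. -/
noncomputable def iF : F8 :=
  ⟨Complex.I, IntermediateField.mem_adjoin_simple_self ℚ Complex.I⟩

/-! ### Auxiliary number-theoretic lemmas -/

section aux
open Zsqrtd Polynomial

lemma zmod5_key : ∀ A d : ZMod 5, A^2 = 3 * d^2 → A = 0 ∧ d = 0 := by decide

lemma zmod5_sq : ∀ A : ZMod 5, A^2 = 0 → A = 0 := by decide

noncomputable def phi3 : GaussianInt →+* ZMod 5 := Zsqrtd.lift ⟨3, by decide⟩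
noncomputable def phi2 : GaussianInt →+* ZMod 5 := Zsqrtd.lift ⟨2, by decide⟩

lemma div5 (z : GaussianInt) (h3 : phi3 z = 0) (h2 : phi2 z = 0) :
    ∃ z' : GaussianInt, z = 5 * z' := by
  simp only [phi3, phi2, Zsqrtd.lift_apply_apply] at h3 h2
  have him : (z.im : ZMod 5) = 0 := by linear_combination h3 - h2
  have hre : (z.re : ZMod 5) = 0 := by linear_combination h3 - 3 * him
  obtain ⟨r, hr⟩ := (ZMod.intCast_zmod_eq_zero_iff_dvd _ 5).1 hre
  obtain ⟨i, hi⟩ := (ZMod.intCast_zmod_eq_zero_iff_dvd _ 5).1 him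
  exact ⟨⟨r, i⟩, by ext <;> simp [hr, hi, Zsqrtd.re_mul, Zsqrtd.im_mul]⟩

lemma phi_eq (φ : GaussianInt →+* ZMod 5) (z w : GaussianInt) (n : ℕ)
    (heq : z^2 - 5 * w^2 = (n : GaussianInt)^2 * Zsqrtd.sqrtd) :
    (φ z)^2 = (φ Zsqrtd.sqrtd) * (n : ZMod 5)^2 := by
  have := congrArg φ heq
  simp only [map_sub, map_mul, map_pow, map_natCast, map_ofNat] at this
  have h5' : (5 : ZMod 5) = 0 := by decide
  linear_combination this + (φ w)^2 * h5'

lemma descent : ∀ n : ℕ, ∀ z w : GaussianInt,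
    z^2 - 5 * w^2 = (n : GaussianInt)^2 * Zsqrtd.sqrtd → n = 0 := by
  intro n
  induction n using Nat.strong_induction_on with
  | _ n ih =>
    intro z w heq
    rcases Nat.eq_zero_or_pos n with h0 | hpos
    · exact h0
    exfalso
    have hs3 : phi3 Zsqrtd.sqrtd = 3 := by simp [phi3]
    have hs2 : phi2 Zsqrtd.sqrtd = 2 := by simp [phi2]
    have e3 := phi_eq phi3 z w n heq; rw [hs3] at e3
    have e2 := phi_eq phi2 z w n heq; rw [hs2] at e2
    obtain ⟨hz3, hn5⟩ := zmod5_key _ _ e3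
    have hz2 : phi2 z = 0 := by
      have : (phi2 z)^2 = 3 * (n : ZMod 5)^2 := by rw [e2, hn5]; ring
      exact (zmod5_key _ _ this).1
    obtain ⟨z', hz'⟩ := div5 z hz3 hz2
    obtain ⟨m, hm⟩ := (ZMod.natCast_eq_zero_iff n 5).1 hn5
    have h5ne : (5 : GaussianInt) ≠ 0 := by
      intro h; have := congrArg Zsqrtd.re h; simp at this
    have heq2 : 5 * z'^2 - w^2 = 5 * (m : GaussianInt)^2 * Zsqrtd.sqrtd := by
      apply mul_left_cancel₀ h5ne
      rw [hz', hm] at heq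
      push_cast at heq
      ring_nf
      ring_nf at heq
      linear_combination heq
    have ew3 : (phi3 w)^2 = 0 := by
      have := congrArg phi3 heq2
      simp only [map_sub, map_mul, map_pow, map_ofNat, hs3] at this
      have h5' : (5 : ZMod 5) = 0 := by decide
      linear_combination ((phi3 z')^2 - 3 * (phi3 (m:GaussianInt))^2) * h5' - this
    have ew2 : (phi2 w)^2 = 0 := by
      have := congrArg phi2 heq2
      simp only [map_sub, map_mul, map_pow, map_ofNat, hs2] at this
      have h5' : (5 : ZMod 5) = 0 := by decide
      linear_combination ((phi2 z')^2 - 2 * (phi2 (m:GaussianInt))^2) * h5' - this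
    obtain ⟨w', hw'⟩ := div5 w (zmod5_sq _ ew3) (zmod5_sq _ ew2)
    have heq3 : z'^2 - 5 * w'^2 = (m : GaussianInt)^2 * Zsqrtd.sqrtd := by
      apply mul_left_cancel₀ h5ne
      rw [hw'] at heq2
      linear_combination heq2
    have hm0 := ih m (by omega) z' w' heq3
    omega

lemma no_rat_sol (p₁ q₁ p₂ q₂ : ℚ)
    (h1 : p₁^2 - q₁^2 - 5*(p₂^2 - q₂^2) = 0)
    (h2 : 2*p₁*q₁ - 10*p₂*q₂ = 1) : False := by
  set D : ℕ := p₁.den * q₁.den * p₂.den * q₂.den with hD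
  have hD0 : D ≠ 0 := by simp [hD, Rat.den_ne_zero]
  set P₁ : ℤ := p₁.num * (q₁.den * p₂.den * q₂.den) with hP₁
  set Q₁ : ℤ := q₁.num * (p₁.den * p₂.den * q₂.den) with hQ₁
  set P₂ : ℤ := p₂.num * (p₁.den * q₁.den * q₂.den) with hP₂
  set Q₂ : ℤ := q₂.num * (p₁.den * q₁.den * p₂.den) with hQ₂
  have m₁ := Rat.mul_den_eq_num p₁
  have m₂ := Rat.mul_den_eq_num q₁
  have m₃ := Rat.mul_den_eq_num p₂
  have m₄ := Rat.mul_den_eq_num q₂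
  have e₁ : (P₁ : ℚ) = p₁ * D := by
    push_cast [hP₁, hD]; linear_combination (-(q₁.den : ℚ) * p₂.den * q₂.den) * m₁
  have e₂ : (Q₁ : ℚ) = q₁ * D := by
    push_cast [hQ₁, hD]; linear_combination (-(p₁.den : ℚ) * p₂.den * q₂.den) * m₂
  have e₃ : (P₂ : ℚ) = p₂ * D := by
    push_cast [hP₂, hD]; linear_combination (-(p₁.den : ℚ) * q₁.den * q₂.den) * m₃
  have e₄ : (Q₂ : ℚ) = q₂ * D := by
    push_cast [hQ₂, hD]; linear_combination (-(p₁.den : ℚ) * q₁.den * p₂.den) * m₄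
  have E1 : P₁^2 - Q₁^2 - 5*(P₂^2 - Q₂^2) = 0 := by
    have : (P₁:ℚ)^2 - (Q₁:ℚ)^2 - 5*((P₂:ℚ)^2 - (Q₂:ℚ)^2) = 0 := by
      rw [e₁, e₂, e₃, e₄]; linear_combination (D:ℚ)^2 * h1
    exact_mod_cast this
  have E2 : 2*P₁*Q₁ - 10*P₂*Q₂ = (D:ℤ)^2 := by
    have : 2*(P₁:ℚ)*(Q₁:ℚ) - 10*(P₂:ℚ)*(Q₂:ℚ) = (D:ℚ)^2 := by
      rw [e₁, e₂, e₃, e₄]; linear_combination (D:ℚ)^2 * h2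
    exact_mod_cast this
  have key : (⟨P₁, Q₁⟩ : GaussianInt)^2 - 5 * (⟨P₂, Q₂⟩ : GaussianInt)^2
      = (D : GaussianInt)^2 * Zsqrtd.sqrtd := by
    ext <;> simp [pow_two, Zsqrtd.re_mul, Zsqrtd.im_mul] <;> ring_nf <;>
      [linear_combination E1; linear_combination E2]
  exact hD0 (descent D _ _ key)

lemma no_complex_sol (p₁ q₁ p₂ q₂ : ℚ)
    (h : ((p₁:ℂ) + q₁ * I)^2 - 5*((p₂:ℂ) + q₂ * I)^2 = I) : False := by
  have hre := congrArg Complex.re h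
  have him := congrArg Complex.im h
  simp [pow_two, Complex.add_re, Complex.add_im, Complex.mul_re, Complex.mul_im,
    Complex.sub_re, Complex.sub_im] at hre him
  apply no_rat_sol p₁ q₁ p₂ q₂
  · exact_mod_cast (by linear_combination hre : (p₁:ℝ)^2 - q₁^2 - 5*((p₂:ℝ)^2 - q₂^2) = 0)
  · exact_mod_cast (by linear_combination him : 2*(p₁:ℝ)*q₁ - 10*(p₂:ℝ)*q₂ = 1)

lemma adjoin_quad_decomp {F : Type*} [Field F] [Algebra F ℂ] {c : ℂ} {s : F}
    (hc : c * c = algebraMap F ℂ s) {x : ℂ} (hx : x ∈ Algebra.adjoin F {c}) :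
    ∃ a b : F, x = algebraMap F ℂ a + algebraMap F ℂ b * c := by
  induction hx using Algebra.adjoin_induction with
  | mem y hy => exact ⟨0, 1, by simp [Set.mem_singleton_iff.1 hy]⟩
  | algebraMap r => exact ⟨r, 0, by simp⟩
  | add x y hx hy ihx ihy =>
    obtain ⟨a, b, rfl⟩ := ihx
    obtain ⟨a', b', rfl⟩ := ihy
    exact ⟨a + a', b + b', by simp [map_add]; ring⟩
  | mul x y hx hy ihx ihy =>
    obtain ⟨a, b, rfl⟩ := ihx
    obtain ⟨a', b', rfl⟩ := ihy
    refine ⟨a * a' + s * b * b', a * b' + a' * b, ?_⟩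
    simp only [map_add, map_mul]
    linear_combination algebraMap F ℂ b * algebraMap F ℂ b' * hc

lemma sqrt5_sq : (((Real.sqrt 5 : ℝ) : ℂ)) * ((Real.sqrt 5 : ℝ) : ℂ) = algebraMap F8 ℂ 5 := by
  have h5 : algebraMap F8 ℂ 5 = 5 := by norm_cast
  rw [h5, ← Complex.ofReal_mul, Real.mul_self_sqrt (by norm_num)]
  norm_num

lemma I_sq : Complex.I * Complex.I = algebraMap ℚ ℂ (-1) := by
  simp [Complex.I_mul_I]

lemma hint5 : IsIntegral F8 ((Real.sqrt 5 : ℝ) : ℂ) := by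
  refine ⟨X^2 - C 5, monic_X_pow_sub_C _ two_ne_zero, ?_⟩
  have h5 : algebraMap F8 ℂ 5 = 5 := by norm_cast
  simp only [eval₂_sub, eval₂_pow, eval₂_X, eval₂_C, h5]
  rw [← Complex.ofReal_pow, Real.sq_sqrt (by norm_num : (5:ℝ) ≥ 0)]
  norm_num

lemma hintI : IsIntegral ℚ Complex.I := by
  refine ⟨X^2 + C 1, ?_, by simp [pow_two, Complex.I_mul_I]⟩
  have : (X^2 + C 1 : ℚ[X]) = X^2 - C (-1) := by simp
  rw [this]; exact monic_X_pow_sub_C _ two_ne_zero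

lemma K8_repr (x : K8) : ∃ a b : F8, x = algebraMap F8 K8 a + algebraMap F8 K8 b * sqrt5K := by
  have hmem : (x : ℂ) ∈ Algebra.adjoin F8 {((Real.sqrt 5 : ℝ) : ℂ)} := by
    rw [← IntermediateField.adjoin_simple_toSubalgebra_of_isAlgebraic hint5.isAlgebraic]
    exact x.2
  obtain ⟨a, b, hab⟩ := adjoin_quad_decomp sqrt5_sq hmem
  exact ⟨a, b, Subtype.ext hab⟩

lemma F8_repr (a : F8) : ∃ p q : ℚ, (a : ℂ) = (p : ℂ) + (q : ℂ) * Complex.I := by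
  have hmem : (a : ℂ) ∈ Algebra.adjoin ℚ {Complex.I} := by
    rw [← IntermediateField.adjoin_simple_toSubalgebra_of_isAlgebraic hintI.isAlgebraic]
    exact a.2
  obtain ⟨p, q, h⟩ := adjoin_quad_decomp I_sq hmem
  refine ⟨p, q, by rw [h]; norm_num⟩

lemma alpha_sq : sqrt5K * sqrt5K = (5:K8) := by
  apply Subtype.ext
  have h5 : ((5:K8):ℂ) = 5 := by norm_cast
  push_cast [h5]
  rw [show ((sqrt5K : K8) : ℂ) = ((Real.sqrt 5 : ℝ):ℂ) from rfl]
  rw [← Complex.ofReal_mul, Real.mul_self_sqrt (by norm_num)]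
  norm_num

lemma two_ne_zero_K8 : (2:K8) ≠ 0 := by
  intro h
  have := congrArg (fun t : K8 => (t : ℂ)) h
  norm_num at this

lemma no_norm : ∀ a b : F8, a^2 - 5*b^2 ≠ iF := by
  intro a b hab
  obtain ⟨p₁, q₁, ha⟩ := F8_repr a
  obtain ⟨p₂, q₂, hb⟩ := F8_repr b
  apply no_complex_sol p₁ q₁ p₂ q₂
  have := congrArg (fun t : F8 => (t : ℂ)) hab
  try simp only at this
  rw [← ha, ← hb]
  have h5 : ((5:F8):ℂ) = 5 := by norm_cast
  push_cast at this
  rw [show ((iF : F8) : ℂ) = Complex.I from rfl, h5] at this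
  linear_combination this

end aux

set_option maxHeartbeats 2000000

/-- `i` is not a norm from `ℚ(i,√5)` to `ℚ(i)` (where `N(x) = x·σ(x)` for the nontrivial
automorphism `σ`), and hence the cyclic algebra `(ℚ(i,√5)/ℚ(i), σ, i)` is a division
algebra. -/
theorem stmt_8 (σ : K8 ≃ₐ[F8] K8) (hσ : σ sqrt5K = -sqrt5K) :
    (¬ ∃ x : K8, x * σ x = algebraMap F8 K8 iF) ∧
    (∀ (D : Type) [Ring D] [Nontrivial D] [Algebra F8 D]
      (ι : K8 →ₐ[F8] D) (u : D),
        (∀ k : K8, u * ι k = ι (σ k) * u) →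
        u ^ 2 = algebraMap F8 D iF →
        (∀ d : D, ∃! c : Fin 2 → K8, d = ∑ i : Fin 2, ι (c i) * u ^ (i : ℕ)) →
        ∀ d : D, d ≠ 0 → IsUnit d) := by
  have hinj : Function.Injective (algebraMap F8 K8) := RingHom.injective _
  -- norm computation
  have hnorm : ∀ x : K8, ∀ a b : F8,
      x = algebraMap F8 K8 a + algebraMap F8 K8 b * sqrt5K →
      x * σ x = algebraMap F8 K8 (a^2 - 5*b^2) := by
    intro x a b hx
    have hσx : σ x = algebraMap F8 K8 a - algebraMap F8 K8 b * sqrt5K := by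
      rw [hx, map_add, map_mul, AlgEquiv.commutes, AlgEquiv.commutes, hσ]
      ring
    rw [hσx, hx]
    simp only [map_sub, map_pow, map_mul, map_ofNat]
    linear_combination (-(algebraMap F8 K8 b)^2) * alpha_sq
  have part1 : ¬ ∃ x : K8, x * σ x = algebraMap F8 K8 iF := by
    rintro ⟨x, hx⟩
    obtain ⟨a, b, hab⟩ := K8_repr x
    rw [hnorm x a b hab] at hx
    exact no_norm a b (hinj hx)
  refine ⟨part1, ?_⟩
  -- σ is an involution
  have hσ2 : ∀ x : K8, σ (σ x) = x := by
    intro x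
    obtain ⟨a, b, rfl⟩ := K8_repr x
    simp only [map_add, map_mul, AlgEquiv.commutes, hσ, map_neg, mul_neg, neg_neg]
  -- σ-fixed elements come from F8
  have hfix : ∀ z : K8, σ z = z → ∃ w : F8, z = algebraMap F8 K8 w := by
    intro z hz
    obtain ⟨a, b, rfl⟩ := K8_repr z
    refine ⟨a, ?_⟩
    have hb : algebraMap F8 K8 b * sqrt5K = 0 := by
      have h1 : σ (algebraMap F8 K8 a + algebraMap F8 K8 b * sqrt5K)
          = algebraMap F8 K8 a - algebraMap F8 K8 b * sqrt5K := by
        rw [map_add, map_mul, AlgEquiv.commutes, AlgEquiv.commutes, hσ]; ring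
      rw [h1] at hz
      have h2 : algebraMap F8 K8 b * sqrt5K + algebraMap F8 K8 b * sqrt5K = 0 := by
        linear_combination -hz
      have h3 : (2:K8) * (algebraMap F8 K8 b * sqrt5K) = 0 := by linear_combination h2
      rcases mul_eq_zero.1 h3 with h | h
      · exact absurd h two_ne_zero_K8
      · exact h
    rw [hb, add_zero]
  intro D _ _ _ ι u hcomm hu2 hrep d hd
  obtain ⟨c, hc, -⟩ := hrep d
  set x : K8 := c 0 with hxdef
  set y : K8 := c 1 with hydef
  have hd2 : d = ι x + ι y * u := by
    rw [hc, Fin.sum_univ_two]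
    simp [pow_one]; rfl
  -- the "reduced norm" z
  set γ : K8 := algebraMap F8 K8 iF with hγ
  set z : K8 := x * σ x - y * σ y * γ with hzdef
  have hz0 : z ≠ 0 := by
    intro h
    have hxy : x * σ x = y * σ y * γ := by
      rw [hzdef] at h; linear_combination h
    by_cases hy : y = 0
    · -- then x * σ x = 0 so x = 0, so d = 0
      apply hd
      have hx0 : x * σ x = 0 := by rw [hxy, hy]; ring
      have hx' : x = 0 := by
        rcases mul_eq_zero.1 hx0 with h' | h'
        · exact h'
        · simpa using congrArg σ.symm h'
      rw [hd2, hx', hy]; simp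
    · -- i is a norm: contradiction
      apply part1
      have hsy : σ y ≠ 0 := fun h0 => hy (by simpa using congrArg σ.symm h0)
      have hσinv : σ y⁻¹ = (σ y)⁻¹ := by
        have h1 : σ y⁻¹ * σ y = 1 := by rw [← map_mul, inv_mul_cancel₀ hy, map_one]
        exact eq_inv_of_mul_eq_one_left h1
      refine ⟨x * y⁻¹, ?_⟩
      calc x * y⁻¹ * σ (x * y⁻¹)
          = (x * σ x) * (y⁻¹ * (σ y)⁻¹) := by rw [map_mul, hσinv]; ring
        _ = (x * σ x) * (y * σ y)⁻¹ := by rw [mul_inv]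
        _ = γ := by
            rw [hxy, mul_comm (y * σ y) γ, mul_assoc,
              mul_inv_cancel₀ (mul_ne_zero hy hsy), mul_one]
  -- z is fixed by σ, hence comes from F8
  have hzfix : σ z = z := by
    rw [hzdef]
    simp only [map_sub, map_mul, hσ2, AlgEquiv.commutes, hγ]
    ring
  obtain ⟨w, hw⟩ := hfix z hzfix
  have hw0 : w ≠ 0 := by
    rintro rfl
    rw [map_zero] at hw
    exact hz0 hw
  -- the quasi-inverse e
  set e : D := ι (σ x) - ι y * u with hedef
  have hγD : ι γ = algebraMap F8 D iF := ι.commutes iF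
  have hBB : (ι y * u) * (ι y * u) = ι (y * σ y * γ) := by
    calc (ι y * u) * (ι y * u) = ι y * (u * ι y) * u := by noncomm_ring
      _ = ι y * (ι (σ y) * u) * u := by rw [hcomm y]
      _ = (ι y * ι (σ y)) * (u * u) := by noncomm_ring
      _ = ι (y * σ y) * u^2 := by rw [map_mul, pow_two]
      _ = ι (y * σ y) * ι γ := by rw [hu2, hγD]
      _ = ι (y * σ y * γ) := by simp only [map_mul]
  have hde : d * e = ι z := by
    rw [hd2, hedef]
    have hBC : (ι y * u) * ι (σ x) = ι (y * x) * u := by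
      calc (ι y * u) * ι (σ x) = ι y * (u * ι (σ x)) := by rw [mul_assoc]
        _ = ι y * (ι (σ (σ x)) * u) := by rw [hcomm (σ x)]
        _ = ι y * (ι x * u) := by rw [hσ2]
        _ = ι (y * x) * u := by rw [← mul_assoc, ← map_mul]
    calc (ι x + ι y * u) * (ι (σ x) - ι y * u)
        = ι x * ι (σ x) - ι x * (ι y * u) + (ι y * u) * ι (σ x) - (ι y * u) * (ι y * u) := by
          noncomm_ring
      _ = ι x * ι (σ x) - ι x * ι y * u + ι (y * x) * u - ι (y * σ y * γ) := by
          rw [hBC, hBB, ← mul_assoc]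
      _ = ι (x * σ x) - ι (y * σ y * γ) := by
          simp only [← map_mul]; rw [mul_comm x y]; noncomm_ring
      _ = ι z := by rw [hzdef, map_sub]
  have hed : e * d = ι z := by
    rw [hd2, hedef]
    have hBA : (ι y * u) * ι x = ι (y * σ x) * u := by
      calc (ι y * u) * ι x = ι y * (u * ι x) := by rw [mul_assoc]
        _ = ι y * (ι (σ x) * u) := by rw [hcomm x]
        _ = ι (y * σ x) * u := by rw [← mul_assoc, ← map_mul]
    calc (ι (σ x) - ι y * u) * (ι x + ι y * u)
        = ι (σ x) * ι x + ι (σ x) * (ι y * u) - (ι y * u) * ι x - (ι y * u) * (ι y * u) := by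
          noncomm_ring
      _ = ι (σ x) * ι x + ι (σ x) * ι y * u - ι (y * σ x) * u - ι (y * σ y * γ) := by
          rw [hBA, hBB, ← mul_assoc]
      _ = ι (x * σ x) - ι (y * σ y * γ) := by
          simp only [← map_mul]; rw [mul_comm (σ x) y, mul_comm (σ x) x]; noncomm_ring
      _ = ι z := by rw [hzdef, map_sub]
  -- the inverse of d
  have hcentral : ∀ t : D, algebraMap F8 D w⁻¹ * t = t * algebraMap F8 D w⁻¹ :=
    fun t => (Algebra.commutes w⁻¹ t).symm ▸ rfl
  have hιz : ι z = algebraMap F8 D w := by rw [hw, ι.commutes]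
  have hwinv : algebraMap F8 D w⁻¹ * algebraMap F8 D w = 1 := by
    rw [← map_mul, inv_mul_cancel₀ hw0, map_one]
  refine ⟨⟨d, algebraMap F8 D w⁻¹ * e, ?_, ?_⟩, rfl⟩
  · -- d * (w⁻¹ * e) = 1
    calc d * (algebraMap F8 D w⁻¹ * e) = algebraMap F8 D w⁻¹ * (d * e) := by
          rw [← mul_assoc, ← Algebra.commutes w⁻¹ d, mul_assoc]
      _ = 1 := by rw [hde, hιz, hwinv]
  · calc (algebraMap F8 D w⁻¹ * e) * d = algebraMap F8 D w⁻¹ * (e * d) := by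
          rw [mul_assoc]
      _ = 1 := by rw [hed, hιz, hwinv]
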